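/- arXiv:1507.02391 — 5 statements merged into one kernel-verified Lean document; each statement's English description precedes it below -/
import Mathlib

section
/- Let G be a finite simple graph (or finite multigraph) with vertex set V and edge set E, and define the Potts partition function P_G(q,ν) = Σ_{c : V → Fin q} ν^{m(c)}, where m(c) is the number of edges whose two endpoints receive the same colour. Then the Fortuin–Kasteleyn identity holds: P_G(q,ν) = Σ_{S ⊆ E} q^{c(S)} (ν-1)^{|S|}, where c(S) is the number of connected components of the spanning subgraph (V,S). -/
open Finset

/-- Number of monochromatic edges of a colouring `c`. -/
def monoEdges {V : Type*} [Fintype V] [DecidableEq V] (G : SimpleGraph V)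
    [DecidableRel G.Adj] {q : ℕ} (c : V → Fin q) : ℕ :=
  (G.edgeFinset.filter fun e => (e.map c).IsDiag).card

/-- Number of connected components of the spanning subgraph on `V` with edge set `S`
(isolated vertices count as components). -/
noncomputable def numComponents (V : Type*) (S : Finset (Sym2 V)) : ℕ :=
  Nat.card (SimpleGraph.fromEdgeSet (↑S : Set (Sym2 V))).ConnectedComponent

section Aux

variable {V : Type*} [Fintype V] [DecidableEq V] {q : ℕ}

lemma key_reach (S : Finset (Sym2 V)) (c : V → Fin q) (hc : ∀ e ∈ S, (e.map c).IsDiag)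
    {v w : V} (hr : (SimpleGraph.fromEdgeSet (↑S : Set (Sym2 V))).Reachable v w) :
    c v = c w := by
  obtain ⟨p⟩ := hr
  induction p with
  | nil => rfl
  | @cons u x y h p ih =>
    rw [SimpleGraph.fromEdgeSet_adj] at h
    have hd := hc _ h.1
    rw [Sym2.map_pair_eq, Sym2.mk_isDiag_iff] at hd
    rw [hd]; exact ih

lemma card_colorings (S : Finset (Sym2 V)) :
    Nat.card {c : V → Fin q // ∀ e ∈ S, (e.map c).IsDiag} = q ^ numComponents V S := by
  set H := SimpleGraph.fromEdgeSet (↑S : Set (Sym2 V)) with hH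
  have e : {c : V → Fin q // ∀ e ∈ S, (e.map c).IsDiag} ≃ (H.ConnectedComponent → Fin q) :=
  { toFun := fun c => SimpleGraph.ConnectedComponent.lift c.1
      (fun v w p _ => key_reach S c.1 c.2 p.reachable)
    invFun := fun g => ⟨fun v => g (H.connectedComponentMk v), by
      intro e he
      induction e using Sym2.ind with
      | _ u v =>
        rw [Sym2.map_pair_eq, Sym2.mk_isDiag_iff]
        by_cases huv : u = v
        · rw [huv]
        · congr 1
          exact SimpleGraph.ConnectedComponent.sound
            (((SimpleGraph.fromEdgeSet_adj _).mpr ⟨Finset.mem_coe.mpr he, huv⟩).reachable)⟩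
    left_inv := fun c => Subtype.ext rfl
    right_inv := fun g => by
      funext x
      induction x using SimpleGraph.ConnectedComponent.ind
      rfl }
  rw [Nat.card_congr e, Nat.card_fun, Nat.card_eq_fintype_card (α := Fin q),
    Fintype.card_fin, numComponents]

end Aux

/-- Fortuin–Kasteleyn identity: the Potts partition function
`P_G(q,ν) = Σ_{c : V → Fin q} ν^{m(c)}` equals
`Σ_{S ⊆ E} q^{c(S)} (ν-1)^{|S|}`. -/
theorem potts_fortuin_kasteleyn {V : Type*} [Fintype V] [DecidableEq V]
    (G : SimpleGraph V) [DecidableRel G.Adj] (q : ℕ)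
    {R : Type*} [CommRing R] (ν : R) :
    ∑ c : V → Fin q, ν ^ monoEdges G c
      = ∑ S ∈ G.edgeFinset.powerset,
          (q : R) ^ numComponents V S * (ν - 1) ^ S.card := by
  have step1 : ∀ c : V → Fin q, ν ^ monoEdges G c =
      ∑ S ∈ G.edgeFinset.powerset,
        (if ∀ e ∈ S, (e.map c).IsDiag then (ν - 1) ^ S.card else 0) := by
    intro c
    rw [monoEdges, ← Finset.prod_const, Finset.prod_filter]
    have h1 : ∀ e : Sym2 V, (if (e.map c).IsDiag then ν else 1) =
        (if (e.map c).IsDiag then ν - 1 else 0) + 1 := by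
      intro e; split <;> ring
    simp_rw [h1]
    rw [Finset.prod_add]
    refine Finset.sum_congr rfl fun S hS => ?_
    rw [Finset.prod_const_one, mul_one, Finset.prod_ite_zero, Finset.prod_const]
    simp
  calc ∑ c : V → Fin q, ν ^ monoEdges G c
      = ∑ c : V → Fin q, ∑ S ∈ G.edgeFinset.powerset,
          (if ∀ e ∈ S, (e.map c).IsDiag then (ν - 1) ^ S.card else 0) :=
        Finset.sum_congr rfl fun c _ => step1 c
    _ = ∑ S ∈ G.edgeFinset.powerset, ∑ c : V → Fin q,
          (if ∀ e ∈ S, (e.map c).IsDiag then (ν - 1) ^ S.card else 0) := Finset.sum_comm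
    _ = _ := by
        refine Finset.sum_congr rfl fun S hS => ?_
        rw [← Finset.sum_filter, Finset.sum_const, nsmul_eq_mul]
        congr 1
        rw [← Fintype.card_subtype, ← Nat.card_eq_fintype_card, card_colorings,
          Nat.cast_pow]
end

section
/- For a finite graph G and a natural number q ≥ 1, the number of proper q-colourings of G equals Σ_{S ⊆ E(G)} q^{c(S)} (-1)^{|S|}, i.e. the Potts partition function specialized at ν = 0 equals the chromatic polynomial of G evaluated at q. -/
open Finset

section aux

variable {V : Type*} [Fintype V] [DecidableEq V]

open SimpleGraph

/-- Colourings constant along edges of `H` are in bijection with maps from components. -/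
noncomputable def monoEquiv (H : SimpleGraph V) (q : ℕ) :
    {c : V → Fin q // ∀ v w, H.Adj v w → c v = c w} ≃ (H.ConnectedComponent → Fin q) where
  toFun c := ConnectedComponent.lift c.1 (by
    have key : ∀ (v w : V) (p : H.Walk v w), c.1 v = c.1 w := by
      intro v w p
      induction p with
      | nil => rfl
      | cons h _ ih => exact (c.2 _ _ h).trans ih
    intro v w p _
    exact key v w p)
  invFun f := ⟨fun v => f (H.connectedComponentMk v), by
    intro v w h
    show f (H.connectedComponentMk v) = f (H.connectedComponentMk w)
    rw [ConnectedComponent.connectedComponentMk_eq_of_adj h]⟩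
  left_inv c := by ext v; rfl
  right_inv f := by
    ext x
    refine x.ind ?_
    intro v; rfl

lemma count_mono (H : SimpleGraph V) [DecidableRel H.Adj] (q : ℕ) :
    (Finset.univ.filter fun c : V → Fin q => ∀ v w, H.Adj v w → c v = c w).card
      = q ^ Nat.card H.ConnectedComponent := by
  classical
  have : Fintype H.ConnectedComponent := Fintype.ofFinite _
  calc (Finset.univ.filter fun c : V → Fin q => ∀ v w, H.Adj v w → c v = c w).card
      = Fintype.card {c : V → Fin q // ∀ v w, H.Adj v w → c v = c w} :=
        (Fintype.card_subtype _).symm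
    _ = Fintype.card (H.ConnectedComponent → Fin q) := Fintype.card_congr (monoEquiv H q)
    _ = q ^ Nat.card H.ConnectedComponent := by
        rw [Fintype.card_fun, Fintype.card_fin, Nat.card_eq_fintype_card]

end aux

/-- The number of proper `q`-colourings of a finite simple graph `G` equals
`Σ_{S ⊆ E(G)} q^{c(S)} (-1)^{|S|}` (the Potts partition function at `ν = 0`,
i.e. the chromatic polynomial evaluated at `q`). -/
theorem proper_colourings_eq_potts_at_zero {V : Type*} [Fintype V] [DecidableEq V]
    (G : SimpleGraph V) [DecidableRel G.Adj] (q : ℕ) (hq : 1 ≤ q) :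
    ((Finset.univ.filter fun c : V → Fin q =>
        ∀ v w, G.Adj v w → c v ≠ c w).card : ℤ)
      = ∑ S ∈ G.edgeFinset.powerset,
          (q : ℤ) ^ numComponents V S * (-1 : ℤ) ^ S.card := by
  classical
  open SimpleGraph in
  -- indicator for an edge being monochromatic
  have key : ∀ c : V → Fin q,
      (if (∀ v w, G.Adj v w → c v ≠ c w) then (1 : ℤ) else 0)
        = ∑ S ∈ G.edgeFinset.powerset,
            (-1 : ℤ) ^ S.card *
              (if (∀ e ∈ S, (Sym2.map c e).IsDiag) then 1 else 0) := by
    intro c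
    have expand := Finset.prod_add (fun e : Sym2 V => -(if (Sym2.map c e).IsDiag then (1 : ℤ) else 0))
      (fun _ => (1 : ℤ)) G.edgeFinset
    have lhs_eq : ∏ e ∈ G.edgeFinset,
        ((-(if (Sym2.map c e).IsDiag then (1 : ℤ) else 0)) + 1)
          = (if (∀ v w, G.Adj v w → c v ≠ c w) then (1 : ℤ) else 0) := by
      by_cases h : ∀ v w, G.Adj v w → c v ≠ c w
      · rw [if_pos h]
        apply Finset.prod_eq_one
        intro e he
        rw [mem_edgeFinset] at he
        induction e
        rename_i a b
        have hcc : c a ≠ c b := h a b ((mem_edgeSet G).mp he)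
        have hab : ¬ (Sym2.map c s(a, b)).IsDiag := by simpa using hcc
        simp [hcc]
      · rw [if_neg h]
        push_neg at h
        obtain ⟨v, w, hadj, hc⟩ := h
        apply Finset.prod_eq_zero (i := s(v, w)) (by rwa [mem_edgeFinset, mem_edgeSet])
        simp [hc]
    rw [← lhs_eq, expand]
    refine Finset.sum_congr rfl fun S hS => ?_
    rw [Finset.prod_const_one, mul_one]
    have : ∏ e ∈ S, (-(if (Sym2.map c e).IsDiag then (1 : ℤ) else 0))
        = (-1 : ℤ) ^ S.card * ∏ e ∈ S, (if (Sym2.map c e).IsDiag then (1 : ℤ) else 0) := by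
      rw [← Finset.prod_const (-1 : ℤ), ← Finset.prod_mul_distrib]
      exact Finset.prod_congr rfl fun e _ => by ring
    rw [this, Finset.prod_boole]
    congr 1
    by_cases h : ∀ e ∈ S, (Sym2.map c e).IsDiag
    · rw [if_pos h, if_pos h]
    · rw [if_neg h, if_neg h]
  -- main computation
  have cardeq : ((Finset.univ.filter fun c : V → Fin q =>
        ∀ v w, G.Adj v w → c v ≠ c w).card : ℤ)
      = ∑ c : V → Fin q, (if (∀ v w, G.Adj v w → c v ≠ c w) then (1 : ℤ) else 0) := by
    rw [Finset.sum_boole, Nat.cast_inj]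
  rw [cardeq]
  simp_rw [key]
  rw [Finset.sum_comm]
  refine Finset.sum_congr rfl fun S hS => ?_
  rw [← Finset.mul_sum, Finset.sum_boole]
  -- count colourings monochromatic on all edges of S
  have hmono : ∀ c : V → Fin q,
      (∀ e ∈ S, (Sym2.map c e).IsDiag) ↔
        (∀ v w, (fromEdgeSet (↑S : Set (Sym2 V))).Adj v w → c v = c w) := by
    intro c
    constructor
    · intro h v w hvw
      rw [fromEdgeSet_adj] at hvw
      have := h _ hvw.1
      simpa using this
    · intro h e he
      induction e
      rename_i a b
      by_cases hab : a = b
      · subst hab; simp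
      · have : (fromEdgeSet (↑S : Set (Sym2 V))).Adj a b := by
          rw [fromEdgeSet_adj]; exact ⟨by simpa using he, hab⟩
        simpa using h a b this
  have : (Finset.univ.filter fun c : V → Fin q =>
        ∀ e ∈ S, (Sym2.map c e).IsDiag).card
      = (Finset.univ.filter fun c : V → Fin q =>
        ∀ v w, (fromEdgeSet (↑S : Set (Sym2 V))).Adj v w → c v = c w).card := by
    congr 1
    apply Finset.filter_congr
    intro c _
    exact (by simpa using hmono c)
  rw [this, count_mono, numComponents]
  push_cast
  ring
end

section
/- The formal power series M(t) = ((1-12t)^{3/2} - 1 + 18t)/(54 t²), interpreted via the binomial series expansion of (1-12t)^{3/2} in ℚ[[t]], satisfies 27 t² M(t)² + (1-18t) M(t) + 16t - 1 = 0 and has constant term 1. -/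
open PowerSeries Finset

/-- The generalized binomial coefficient `binomial(3/2, n)` in `ℚ`. -/
noncomputable def binomThreeHalves (n : ℕ) : ℚ :=
  (∏ i ∈ Finset.range n, ((3 : ℚ) / 2 - i)) / n.factorial

/-- The binomial series `(1 - 12t)^{3/2} = Σ_n binomial(3/2,n) (-12t)ⁿ` in `ℚ[[t]]`. -/
noncomputable def binomialSeriesThreeHalves : PowerSeries ℚ :=
  PowerSeries.mk fun n => binomThreeHalves n * (-12) ^ n

/-- The coefficients of the binomial series. -/
noncomputable def aa (n : ℕ) : ℚ := binomThreeHalves n * (-12) ^ n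

lemma aa_rec (n : ℕ) : (n + 1 : ℚ) * aa (n + 1) = (12 * n - 18) * aa n := by
  have hfac : ((n+1).factorial : ℚ) = (n+1) * n.factorial := by
    push_cast [Nat.factorial_succ]; ring
  have hne : (n.factorial : ℚ) ≠ 0 := by exact_mod_cast n.factorial_ne_zero
  have hne1 : ((n:ℚ)+1) ≠ 0 := by positivity
  simp only [aa, binomThreeHalves, Finset.prod_range_succ, hfac]
  field_simp
  ring

/-- The convolution square of the coefficients. -/
noncomputable def SS (n : ℕ) : ℚ := ∑ k ∈ Finset.range (n+1), aa k * aa (n - k)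
noncomputable def TT (n : ℕ) : ℚ := ∑ k ∈ Finset.range (n+1), (k : ℚ) * (aa k * aa (n - k))

lemma TT_eq (n : ℕ) : 2 * TT n = (n : ℚ) * SS n := by
  have h1 : TT n = ∑ k ∈ Finset.range (n+1), ((n : ℚ) - k) * (aa k * aa (n - k)) := by
    rw [TT, ← Finset.sum_range_reflect]
    simp only [Nat.add_sub_cancel]
    apply Finset.sum_congr rfl
    intro k hk
    rw [Finset.mem_range] at hk
    have hk' : k ≤ n := Nat.lt_succ_iff.mp hk
    rw [Nat.sub_sub_self hk', Nat.cast_sub hk']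
    ring
  rw [two_mul]
  nth_rewrite 2 [h1]
  rw [TT, SS, ← Finset.sum_add_distrib, Finset.mul_sum]
  apply Finset.sum_congr rfl
  intro k hk
  ring

lemma TT_succ (n : ℕ) : TT (n + 1) = 12 * TT n - 18 * SS n := by
  rw [TT, Finset.sum_range_succ']
  simp only [Nat.cast_zero, zero_mul, add_zero]
  rw [TT, SS, Finset.mul_sum, Finset.mul_sum, ← Finset.sum_sub_distrib]
  apply Finset.sum_congr rfl
  intro k hk
  have h := aa_rec k
  have : (n + 1 - (k+1)) = n - k := by omega
  rw [this]
  push_cast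
  linear_combination aa (n - k) * h

lemma SS_rec (n : ℕ) : ((n : ℚ) + 1) * SS (n + 1) = (12 * n - 36) * SS n := by
  have h1 := TT_eq (n + 1)
  have h2 := TT_succ n
  have h3 := TT_eq n
  push_cast at h1
  nlinarith [h1, h2, h3]

lemma aa0 : aa 0 = 1 := by norm_num [aa, binomThreeHalves]
lemma aa1 : aa 1 = -18 := by
  norm_num [aa, binomThreeHalves, Finset.prod_range_succ, Nat.factorial]
lemma aa2 : aa 2 = 54 := by
  norm_num [aa, binomThreeHalves, Finset.prod_range_succ, Nat.factorial]
lemma aa3 : aa 3 = 108 := by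
  norm_num [aa, binomThreeHalves, Finset.prod_range_succ, Nat.factorial]

lemma SS0 : SS 0 = 1 := by simp [SS, aa0]
lemma SS1 : SS 1 = -36 := by
  simp [SS, Finset.sum_range_succ, aa0, aa1]; norm_num
lemma SS2 : SS 2 = 432 := by
  simp [SS, Finset.sum_range_succ, aa0, aa1, aa2]; norm_num
lemma SS3 : SS 3 = -1728 := by
  simp [SS, Finset.sum_range_succ, aa0, aa1, aa2, aa3]; norm_num

lemma SS_zero (n : ℕ) : SS (n + 4) = 0 := by
  induction n with
  | zero =>
      have h := SS_rec 3
      rw [SS3] at h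
      norm_num at h
      exact h
  | succ m ih =>
      have h := SS_rec (m + 4)
      rw [ih, mul_zero] at h
      have hne : ((m + 4 : ℕ) : ℚ) + 1 ≠ 0 := by positivity
      have he : m + 1 + 4 = m + 4 + 1 := by omega
      rw [he]
      exact (mul_eq_zero.mp h).resolve_left hne

lemma coeff_sq (n : ℕ) : (PowerSeries.coeff n) (binomialSeriesThreeHalves ^ 2) = SS n := by
  rw [sq, PowerSeries.coeff_mul, Finset.Nat.sum_antidiagonal_eq_sum_range_succ_mk, SS]
  apply Finset.sum_congr rfl
  intro k hk
  simp [binomialSeriesThreeHalves, aa]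

lemma numC (c : ℚ) : (PowerSeries.C) c * PowerSeries.X ^ 3 = 0 → True := fun _ => trivial

lemma sq_eq : binomialSeriesThreeHalves ^ 2 =
    1 - 36 * PowerSeries.X + 432 * PowerSeries.X ^ 2 - 1728 * PowerSeries.X ^ 3 := by
  have h36 : (36 : PowerSeries ℚ) = PowerSeries.C 36 := (map_ofNat (PowerSeries.C) _).symm
  have h432 : (432 : PowerSeries ℚ) = PowerSeries.C 432 := (map_ofNat (PowerSeries.C) _).symm
  have h1728 : (1728 : PowerSeries ℚ) = PowerSeries.C 1728 := (map_ofNat (PowerSeries.C) _).symm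
  ext n
  rw [coeff_sq, h36, h432, h1728]
  match n with
  | 0 => simp [SS0, PowerSeries.coeff_X_pow]
  | 1 => simp [SS1, PowerSeries.coeff_X_pow, PowerSeries.coeff_one]
  | 2 => simp [SS2, PowerSeries.coeff_X_pow, PowerSeries.coeff_one]
  | 3 => simp [SS3, PowerSeries.coeff_X_pow, PowerSeries.coeff_one]
  | (m+4) => simp [SS_zero, PowerSeries.coeff_X_pow, PowerSeries.coeff_one]

lemma bs_coeff (n : ℕ) : PowerSeries.coeff n binomialSeriesThreeHalves = aa n := by
  simp [binomialSeriesThreeHalves, aa]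

lemma num_ne : (108 : PowerSeries ℚ) ≠ 0 := by
  intro h
  have := congrArg (PowerSeries.constantCoeff) h
  simp [map_ofNat] at this

/-- The power series `M(t) = ((1-12t)^{3/2} - 1 + 18t)/(54 t²)` exists in `ℚ[[t]]`
(i.e. `(1-12t)^{3/2} - 1 + 18t` is divisible by `54 t²`), has constant term `1`,
and satisfies `27 t² M² + (1 - 18t) M + 16t - 1 = 0`. -/
theorem planar_maps_closed_form :
    ∃ M : PowerSeries ℚ,
      54 * PowerSeries.X ^ 2 * M = binomialSeriesThreeHalves - 1 + 18 * PowerSeries.X ∧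
      27 * PowerSeries.X ^ 2 * M ^ 2 + (1 - 18 * PowerSeries.X) * M
        + 16 * PowerSeries.X - 1 = 0 ∧
      PowerSeries.constantCoeff M = 1 := by
  refine ⟨PowerSeries.mk fun n => aa (n + 2) / 54, ?_, ?_, ?_⟩
  case refine_3 =>
    simp only [PowerSeries.constantCoeff_mk]
    rw [show (0 : ℕ) + 2 = 2 from rfl, aa2]; norm_num
  case refine_1 =>
    set M : PowerSeries ℚ := PowerSeries.mk fun n => aa (n + 2) / 54 with hM
    have h54 : (54 : PowerSeries ℚ) = PowerSeries.C 54 :=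
      (map_ofNat (PowerSeries.C) _).symm
    have h18 : (18 : PowerSeries ℚ) = PowerSeries.C 18 :=
      (map_ofNat (PowerSeries.C) _).symm
    ext n
    rw [mul_assoc, h54, h18, map_add, map_sub, PowerSeries.coeff_C_mul]
    match n with
    | 0 =>
      simp [PowerSeries.coeff_X_pow_mul', bs_coeff, aa0]
    | 1 =>
      simp [PowerSeries.coeff_X_pow_mul', bs_coeff, aa1,
        PowerSeries.coeff_one]
    | (m+2) =>
      rw [PowerSeries.coeff_X_pow_mul, hM]
      simp [bs_coeff, PowerSeries.coeff_one, PowerSeries.coeff_X]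
      ring
  case refine_2 =>
    set M : PowerSeries ℚ := PowerSeries.mk fun n => aa (n + 2) / 54 with hM
    have E1 : 54 * PowerSeries.X ^ 2 * M = binomialSeriesThreeHalves - 1 + 18 * PowerSeries.X := by
      have h54 : (54 : PowerSeries ℚ) = PowerSeries.C 54 :=
        (map_ofNat (PowerSeries.C) _).symm
      have h18 : (18 : PowerSeries ℚ) = PowerSeries.C 18 :=
        (map_ofNat (PowerSeries.C) _).symm
      ext n
      rw [mul_assoc, h54, h18, map_add, map_sub, PowerSeries.coeff_C_mul]
      match n with
      | 0 =>
        simp [PowerSeries.coeff_X_pow_mul', bs_coeff, aa0]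
      | 1 =>
        simp [PowerSeries.coeff_X_pow_mul', bs_coeff, aa1,
          PowerSeries.coeff_one]
      | (m+2) =>
        rw [PowerSeries.coeff_X_pow_mul, hM]
        simp [bs_coeff, PowerSeries.coeff_one, PowerSeries.coeff_X]
        ring
    have hne : (108 * PowerSeries.X ^ 2 : PowerSeries ℚ) ≠ 0 :=
      mul_ne_zero num_ne (pow_ne_zero _ PowerSeries.X_ne_zero)
    have key : (108 * PowerSeries.X ^ 2 : PowerSeries ℚ) *
        (27 * PowerSeries.X ^ 2 * M ^ 2 + (1 - 18 * PowerSeries.X) * M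
          + 16 * PowerSeries.X - 1) = 108 * PowerSeries.X ^ 2 * 0 := by
      rw [mul_zero]
      linear_combination (54 * PowerSeries.X ^ 2 * M + 1 - 18 * PowerSeries.X
        + binomialSeriesThreeHalves) * E1 + sq_eq
    exact mul_left_cancel₀ hne key
end

section
/- Let m ≥ 3 be an odd integer and q = 2 + 2cos(2π/m). For each j with 2 ≤ j ≤ (m-1)/2, set q_j = 2 + 2cos(2jπ/m). Then the quadratic equation q(q - q_j) v² + q(q_j - 4) v + (4 - q_j) = 0 has exactly the two roots v_j⁺ = sin(jπ/m)/(2cos(π/m)·sin((j+1)π/m)) and v_j⁻ = sin(jπ/m)/(2cos(π/m)·sin((j-1)π/m)), and these two roots are distinct. -/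
open Real

set_option maxHeartbeats 2000000

/-- Let `m ≥ 3` be odd, `q = 2 + 2cos(2π/m)` and, for `2 ≤ j ≤ (m-1)/2`,
`q_j = 2 + 2cos(2jπ/m)`. Then the quadratic
`q(q - q_j) v² + q(q_j - 4) v + (4 - q_j) = 0` has exactly the two distinct roots
`v_j⁺ = sin(jπ/m)/(2cos(π/m)sin((j+1)π/m))` and
`v_j⁻ = sin(jπ/m)/(2cos(π/m)sin((j-1)π/m))`. -/
theorem quadratic_roots_vjpm (m j : ℕ) (hm : Odd m) (hm3 : 3 ≤ m)
    (hj2 : 2 ≤ j) (hjn : j ≤ (m - 1) / 2) :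
    let q : ℝ := 2 + 2 * Real.cos (2 * π / m)
    let qj : ℝ := 2 + 2 * Real.cos (2 * j * π / m)
    let vp : ℝ := Real.sin (j * π / m) / (2 * Real.cos (π / m) * Real.sin ((j + 1) * π / m))
    let vm : ℝ := Real.sin (j * π / m) / (2 * Real.cos (π / m) * Real.sin ((j - 1 : ℕ) * π / m))
    vp ≠ vm ∧
      ∀ v : ℝ, q * (q - qj) * v ^ 2 + q * (qj - 4) * v + (4 - qj) = 0 ↔
        (v = vp ∨ v = vm) := by
  intro q qj vp vm
  obtain ⟨k, hk⟩ := hm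
  have hk2 : 2 ≤ k := by omega
  have hjk : j ≤ k := by omega
  have hm0 : (0:ℝ) < m := by positivity
  have hmR : (m:ℝ) = 2*k+1 := by push_cast [hk]; ring
  have hjR : (j:ℝ) ≤ k := by exact_mod_cast hjk
  have hjR2 : (2:ℝ) ≤ j := by exact_mod_cast hj2
  -- angle bounds
  have hθ0 : 0 < π / m := by positivity
  have h2j : 2*(j:ℝ) < m := by
    rw [hmR]; nlinarith
  have hjlt : (j:ℝ) * π / m < π / 2 := by
    rw [div_lt_div_iff₀ hm0 (by norm_num : (0:ℝ) < 2)]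
    calc (j:ℝ) * π * 2 = (2*j) * π := by ring
    _ < m * π := by nlinarith [pi_pos]
    _ = π * m := by ring
  have hj0 : 0 < (j:ℝ) * π / m := by positivity
  have hθlt : π / m < π / 2 := by
    rw [div_lt_div_iff₀ hm0 (by norm_num : (0:ℝ) < 2)]
    nlinarith [pi_pos]
  -- trig variable abbreviations
  set s : ℝ := Real.sin (π / m) with hs_def
  set c : ℝ := Real.cos (π / m) with hc_def
  set S : ℝ := Real.sin ((j:ℝ) * π / m) with hS_def
  set C : ℝ := Real.cos ((j:ℝ) * π / m) with hC_def
  have hs : 0 < s := Real.sin_pos_of_pos_of_lt_pi hθ0 (by linarith [pi_pos])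
  have hc : 0 < c := Real.cos_pos_of_mem_Ioo ⟨by linarith, hθlt⟩
  have hS : 0 < S := Real.sin_pos_of_pos_of_lt_pi hj0 (by linarith [pi_pos])
  have hC : 0 < C := Real.cos_pos_of_mem_Ioo ⟨by linarith, hjlt⟩
  set Dp : ℝ := S * c + C * s with hDp_def
  set Dm : ℝ := S * c - C * s with hDm_def
  have hDp : 0 < Dp := by positivity
  have hDm : 0 < Dm := by
    have e : (j:ℝ) * π / m - π / m = ((j:ℝ) - 1) * π / m := by ring
    have h1 : 0 < ((j:ℝ) - 1) * π / m := by
      apply div_pos _ hm0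
      nlinarith [pi_pos]
    have h2 : ((j:ℝ) - 1) * π / m < π := by
      rw [div_lt_iff₀ hm0]
      nlinarith [pi_pos]
    have := Real.sin_pos_of_pos_of_lt_pi h1 h2
    rw [← e, Real.sin_sub] at this
    exact this
  -- identify q, qj
  have hq : q = 4 * c^2 := by
    show 2 + 2 * Real.cos (2 * π / m) = 4 * c^2
    rw [show 2 * π / (m:ℝ) = 2 * (π / m) by ring, Real.cos_two_mul]
    ring
  have hqj : qj = 4 * C^2 := by
    show 2 + 2 * Real.cos (2 * j * π / m) = 4 * C^2
    rw [show 2 * (j:ℝ) * π / m = 2 * ((j:ℝ) * π / m) by ring, Real.cos_two_mul]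
    ring
  -- identify vp, vm
  have hvp : vp = S / (2 * c * Dp) := by
    show Real.sin (j * π / m) / (2 * Real.cos (π / m) * Real.sin ((j + 1) * π / m)) = _
    rw [show ((j:ℝ) + 1) * π / m = (j:ℝ) * π / m + π / m by ring, Real.sin_add]
  have hvm : vm = S / (2 * c * Dm) := by
    show Real.sin (j * π / m) / (2 * Real.cos (π / m) * Real.sin ((j - 1 : ℕ) * π / m)) = _
    rw [show ((j - 1 : ℕ) : ℝ) = (j:ℝ) - 1 by
      rw [Nat.cast_sub (by omega)]; norm_num]
    rw [show ((j:ℝ) - 1) * π / m = (j:ℝ) * π / m - π / m by ring, Real.sin_sub]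
  -- Pythagoras
  have hpy1 : s^2 = 1 - c^2 := by
    have := Real.sin_sq_add_cos_sq (π / m); linarith
  have hpy2 : C^2 = 1 - S^2 := by
    have := Real.sin_sq_add_cos_sq ((j:ℝ) * π / m); linarith
  have hD : c^2 - C^2 = Dp * Dm := by
    rw [hDp_def, hDm_def]
    calc c^2 - C^2 = c^2*(S^2+C^2) - C^2*(s^2+c^2) := by
          rw [hpy2]; nlinarith [hpy1]
    _ = (S*c+C*s)*(S*c-C*s) := by ring
  have hcne : c ≠ 0 := ne_of_gt hc
  have hDpne : Dp ≠ 0 := ne_of_gt hDp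
  have hDmne : Dm ≠ 0 := ne_of_gt hDm
  constructor
  · -- vp ≠ vm
    rw [hvp, hvm]
    have hdiff : Dp - Dm = 2 * C * s := by rw [hDp_def, hDm_def]; ring
    have hlt : 2 * c * Dm < 2 * c * Dp := by nlinarith [mul_pos hC hs, mul_pos hc (mul_pos hC hs)]
    have : S / (2 * c * Dp) < S / (2 * c * Dm) :=
      div_lt_div_of_pos_left hS (by positivity) hlt
    exact ne_of_lt this
  · intro v
    have key : q * (q - qj) * v ^ 2 + q * (qj - 4) * v + (4 - qj)
        = (16 * c^2 * Dp * Dm) * (v - vp) * (v - vm) := by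
      rw [hq, hqj, hvp, hvm, hpy2]
      have expand : (16 * c^2 * Dp * Dm) * (v - S / (2 * c * Dp)) * (v - S / (2 * c * Dm))
          = 16 * c^2 * (Dp * Dm) * v^2 - 8 * c * S * (Dp + Dm) * v + 4 * S^2 := by
        field_simp
        ring
      rw [expand, ← hD, hDp_def, hDm_def]
      linear_combination (16*c^2*v^2) * hpy2
    rw [key]
    have hA : (16 * c^2 * Dp * Dm) ≠ 0 := by positivity
    constructor
    · intro h
      rcases mul_eq_zero.mp h with h' | h'
      · rcases mul_eq_zero.mp h' with h'' | h''
        · exact absurd h'' hA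
        · exact Or.inl (by linarith [sub_eq_zero.mp h''])
      · exact Or.inr (by linarith [sub_eq_zero.mp h'])
    · rintro (rfl | rfl) <;> ring
end

section
/- For every natural number m ≥ 1 the polynomial identity T_m(u)² - 1 = 4^{m-1}·(u²-1)·(u²)^{[m even]}·Π_{j=1}^{⌊(m-1)/2⌋} (u² - cos²(jπ/m))² holds over ℝ, where the exponent [m even] equals 1 if m is even and 0 otherwise. -/
open Polynomial Real Finset

private lemma U_deg_coeff : ∀ n : ℕ, (Polynomial.Chebyshev.U ℝ n).natDegree ≤ n ∧
    (Polynomial.Chebyshev.U ℝ n).coeff n = 2 ^ n := by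
  intro n
  induction n using Nat.strong_induction_on with
  | _ n ih =>
    match n with
    | 0 => simp [Polynomial.Chebyshev.U_zero]
    | 1 =>
      constructor
      · simp [Polynomial.Chebyshev.U_one]
      · simp [Polynomial.Chebyshev.U_one, coeff_X]
    | (n+2) =>
      have h2 : Polynomial.Chebyshev.U ℝ ((n:ℤ)+2)
          = 2 * X * Polynomial.Chebyshev.U ℝ ((n:ℤ)+1) - Polynomial.Chebyshev.U ℝ n :=
        Polynomial.Chebyshev.U_add_two ℝ n
      have c1 : ((n+1 : ℕ) : ℤ) = (n:ℤ)+1 := by push_cast; ring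
      have c2 : ((n+2 : ℕ) : ℤ) = (n:ℤ)+2 := by push_cast; ring
      obtain ⟨hd1, hc1⟩ := ih (n+1) (by omega)
      obtain ⟨hd0, hc0⟩ := ih n (by omega)
      rw [c1] at hd1 hc1
      rw [c2, h2]
      constructor
      · refine (natDegree_sub_le _ _).trans ?_
        have : (2 * X * Polynomial.Chebyshev.U ℝ ((n:ℤ)+1)).natDegree ≤ n + 2 := by
          refine (natDegree_mul_le).trans ?_
          have hx : ((2 : ℝ[X]) * X).natDegree ≤ 1 := natDegree_mul_le.trans (by simp)
          omega
        simp only [max_le_iff]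
        exact ⟨this, hd0.trans (by omega)⟩
      · rw [coeff_sub, coeff_eq_zero_of_natDegree_lt (lt_of_le_of_lt hd0 (by omega))]
        have : (2 * X * Polynomial.Chebyshev.U ℝ ((n:ℤ)+1)).coeff (n+2)
            = 2 * (Polynomial.Chebyshev.U ℝ ((n:ℤ)+1)).coeff (n+1) := by
          rw [mul_assoc, coeff_ofNat_mul, coeff_X_mul]
        rw [this, hc1]
        ring

/-- For `m ≥ 1`, the factorization
`T_m(u)² - 1 = 4^{m-1}·(u²-1)·(u²)^{[m even]}·Π_{j=1}^{⌊(m-1)/2⌋} (u² - cos²(jπ/m))²`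
holds for all real `u`. -/
theorem chebyshev_T_sq_sub_one_factorization (m : ℕ) (hm : 1 ≤ m) (u : ℝ) :
    (Polynomial.Chebyshev.T ℝ (m : ℤ)).eval u ^ 2 - 1
      = 4 ^ (m - 1) * (u ^ 2 - 1) * (u ^ 2) ^ (if Even m then 1 else 0) *
          ∏ j ∈ Finset.Icc 1 ((m - 1) / 2), (u ^ 2 - Real.cos (j * π / m) ^ 2) ^ 2 := by
  have hm0 : (m : ℝ) ≠ 0 := by positivity
  set c : ℕ → ℝ := fun j => Real.cos (j * π / m) with hc
  -- Step 1: T_m(u)^2 - 1 = (u^2-1) * U_{m-1}(u)^2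
  have hT : (Polynomial.Chebyshev.T ℝ (m : ℤ)).eval u ^ 2 - 1
      = (u ^ 2 - 1) * (Polynomial.Chebyshev.U ℝ ((m : ℤ) - 1)).eval u ^ 2 := by
    have hpq : (Polynomial.Chebyshev.T ℝ (m : ℤ)) ^ 2 - 1
        = (X ^ 2 - 1) * (Polynomial.Chebyshev.U ℝ ((m : ℤ) - 1)) ^ 2 := by
      apply Polynomial.eq_of_infinite_eval_eq
      apply Set.Infinite.mono (s := Set.Icc (-1 : ℝ) 1)
      · intro x hx
        obtain ⟨hx1, hx2⟩ := hx
        have hxc : Real.cos (Real.arccos x) = x := Real.cos_arccos hx1 hx2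
        set θ := Real.arccos x
        simp only [Set.mem_setOf_eq, eval_sub, eval_pow, eval_one, eval_mul, eval_X]
        rw [← hxc, Polynomial.Chebyshev.T_real_cos]
        have hU := Polynomial.Chebyshev.U_real_cos θ ((m : ℤ) - 1)
        have h1 : Real.sin θ ^ 2 + Real.cos θ ^ 2 = 1 := Real.sin_sq_add_cos_sq θ
        have h2 : Real.sin ((m : ℝ) * θ) ^ 2 + Real.cos ((m : ℝ) * θ) ^ 2 = 1 :=
          Real.sin_sq_add_cos_sq _
        have hUm : (Polynomial.Chebyshev.U ℝ ((m:ℤ)-1)).eval (Real.cos θ) * Real.sin θ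
            = Real.sin ((m : ℝ) * θ) := by
          rw [hU]; norm_num
        have hcm : Real.cos (((m:ℤ) : ℝ) * θ) = Real.cos ((m : ℝ) * θ) := by push_cast; ring
        rw [hcm]
        linear_combination ((Polynomial.Chebyshev.U ℝ ((m:ℤ)-1)).eval (Real.cos θ)
          * Real.sin θ + Real.sin ((m:ℝ) * θ)) * hUm
          - (Polynomial.Chebyshev.U ℝ ((m:ℤ)-1)).eval (Real.cos θ) ^ 2 * h1 + h2
      · exact Set.Icc_infinite (by norm_num)
    have := congrArg (Polynomial.eval u) hpq
    simpa using this
  -- Step 2: factorization of U_{m-1}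
  have hinj : Set.InjOn c ↑(Finset.Icc 1 (m-1)) := by
    intro a ha b hb hab
    simp only [Finset.coe_Icc, Set.mem_Icc] at ha hb
    have hπ := Real.pi_pos
    have hma : (a : ℝ) * π / m ∈ Set.Icc 0 π := by
      constructor
      · positivity
      · rw [div_le_iff₀ (by positivity)]
        have : (a : ℝ) ≤ m := by exact_mod_cast (by omega : a ≤ m)
        nlinarith
    have hmb : (b : ℝ) * π / m ∈ Set.Icc 0 π := by
      constructor
      · positivity
      · rw [div_le_iff₀ (by positivity)]
        have : (b : ℝ) ≤ m := by exact_mod_cast (by omega : b ≤ m)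
        nlinarith
    have := Real.injOn_cos hma hmb hab
    field_simp at this
    exact_mod_cast this
  have hUfac : Polynomial.Chebyshev.U ℝ ((m : ℤ) - 1)
      = C ((2:ℝ) ^ (m-1)) * ∏ j ∈ Finset.Icc 1 (m-1), (X - C (c j)) := by
    have hcast : ((m - 1 : ℕ) : ℤ) = (m : ℤ) - 1 := by omega
    set p := Polynomial.Chebyshev.U ℝ ((m : ℤ) - 1) with hp
    set q := C ((2:ℝ) ^ (m-1)) * ∏ j ∈ Finset.Icc 1 (m-1), (X - C (c j)) with hq
    have hmonic : (∏ j ∈ Finset.Icc 1 (m-1), (X - C (c j))).Monic :=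
      monic_prod_of_monic _ _ (fun j _ => monic_X_sub_C _)
    have hdegprod : (∏ j ∈ Finset.Icc 1 (m-1), (X - C (c j))).natDegree = m - 1 := by
      rw [natDegree_prod_of_monic _ _ (fun j _ => monic_X_sub_C _)]
      simp [Nat.card_Icc]
    have hqdeg : q.natDegree ≤ m - 1 := (natDegree_C_mul_le _ _).trans (le_of_eq hdegprod)
    have hqcoeff : q.coeff (m-1) = 2 ^ (m-1) := by
      have h1 : (∏ j ∈ Finset.Icc 1 (m-1), (X - C (c j))).coeff (m-1) = 1 := by
        nth_rewrite 2 [← hdegprod]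
        exact hmonic.coeff_natDegree
      rw [hq, coeff_C_mul, h1, mul_one]
    obtain ⟨hpdeg, hpcoeff⟩ := U_deg_coeff (m-1)
    rw [hcast] at hpdeg hpcoeff
    have hr : p - q = 0 := by
      have hrdeg : (p - q).natDegree ≤ m - 1 := (natDegree_sub_le _ _).trans (max_le hpdeg hqdeg)
      have hrcoeff : (p - q).coeff (m-1) = 0 := by
        rw [coeff_sub, hpcoeff, hqcoeff, sub_self]
      rcases Nat.eq_zero_or_pos (m-1) with h0 | hpos
      · have h00 : (p - q).natDegree ≤ 0 := by omega
        have hre := Polynomial.eq_C_of_natDegree_le_zero h00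
        rw [h0] at hrcoeff
        rw [hre, hrcoeff, map_zero]
      · apply Polynomial.eq_zero_of_natDegree_lt_card_of_eval_eq_zero' _
          ((Finset.Icc 1 (m-1)).image c)
        · intro x hx
          simp only [Finset.mem_image] at hx
          obtain ⟨j, hj, rfl⟩ := hx
          simp only [Finset.mem_Icc] at hj
          have hθ : (0:ℝ) < (j:ℝ) * π / m := by
            have : (0:ℝ) < (j:ℝ) := by exact_mod_cast (by omega : 0 < j)
            have := Real.pi_pos
            positivity
          have hθ2 : (j:ℝ) * π / m < π := by
            rw [div_lt_iff₀ (by positivity)]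
            have : (j : ℝ) < m := by exact_mod_cast (by omega : j < m)
            nlinarith [Real.pi_pos]
          have hsin : Real.sin ((j:ℝ) * π / m) ≠ 0 :=
            ne_of_gt (Real.sin_pos_of_pos_of_lt_pi hθ hθ2)
          have hpz : p.eval (c j) = 0 := by
            have hU := Polynomial.Chebyshev.U_real_cos ((j:ℝ) * π / m) ((m : ℤ) - 1)
            have hmθ : (((m:ℤ) - 1 : ℤ) + 1 : ℝ) * ((j:ℝ) * π / m) = j * π := by
              push_cast
              field_simp
              ring
            rw [hmθ] at hU
            have : Real.sin ((j:ℝ) * π) = 0 := by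
              have := Real.sin_nat_mul_pi j
              simpa using this
            rw [this] at hU
            have := mul_eq_zero.mp hU
            tauto
          have hqz : q.eval (c j) = 0 := by
            rw [hq]
            simp only [eval_mul, eval_C, eval_prod, eval_sub, eval_X]
            rw [Finset.prod_eq_zero (Finset.mem_Icc.mpr hj) (by simp)]
            ring
          rw [eval_sub, hpz, hqz, sub_zero]
        · rw [Finset.card_image_of_injOn hinj, Nat.card_Icc]
          simp only [Nat.add_sub_cancel]
          rcases eq_or_ne (p - q) 0 with h | h
          · rw [h]; simpa using hpos
          · have : (p - q).natDegree ≠ m - 1 := by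
              intro heq
              have := Polynomial.leadingCoeff_ne_zero.mpr h
              rw [Polynomial.leadingCoeff, heq, hrcoeff] at this
              exact this rfl
            omega
    exact sub_eq_zero.mp hr
  -- Step 3: assemble
  have hUeval : (Polynomial.Chebyshev.U ℝ ((m:ℤ)-1)).eval u
      = 2^(m-1) * ∏ j ∈ Finset.Icc 1 (m-1), (u - c j) := by
    rw [hUfac]
    simp [eval_prod]
  have hpair : ∀ j ∈ Finset.Icc 1 (m-1), c (m - j) = - c j := by
    intro j hj
    simp only [Finset.mem_Icc] at hj
    have hjm : j ≤ m := by omega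
    have h1 : ((m - j : ℕ) : ℝ) = (m:ℝ) - j := by
      push_cast [hjm]; ring
    have h2 : ((m:ℝ) - j) * π / m = π - (j:ℝ) * π / m := by
      field_simp
    simp only [hc, h1, h2, Real.cos_pi_sub]
  have hP2 : (∏ j ∈ Finset.Icc 1 (m-1), (u - c j)) ^ 2
      = ∏ j ∈ Finset.Icc 1 (m-1), (u^2 - c j ^ 2) := by
    have hre : (∏ j ∈ Finset.Icc 1 (m-1), (u - c j))
        = ∏ j ∈ Finset.Icc 1 (m-1), (u + c j) := by
      refine Finset.prod_nbij' (fun j => m - j) (fun j => m - j) ?_ ?_ ?_ ?_ ?_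
      · intro a ha; simp only [Finset.mem_Icc] at *; omega
      · intro a ha; simp only [Finset.mem_Icc] at *; omega
      · intro a ha; simp only [Finset.mem_Icc] at ha; omega
      · intro a ha; simp only [Finset.mem_Icc] at ha; omega
      · intro a ha
        rw [hpair a ha]
        ring
    rw [sq]
    nth_rewrite 2 [hre]
    rw [← Finset.prod_mul_distrib]
    exact Finset.prod_congr rfl (fun j _ => by ring)
  have hsym : ∀ j, 1 ≤ j → j ≤ m - 1 → u^2 - c (m-j) ^ 2 = u^2 - c j ^ 2 := by
    intro j h1 h2
    rw [hpair j (Finset.mem_Icc.mpr ⟨h1, h2⟩)]; ring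
  have hQ : (∏ j ∈ Finset.Icc 1 (m-1), (u^2 - c j ^ 2))
      = (u^2)^(if Even m then 1 else 0) *
        ∏ j ∈ Finset.Icc 1 ((m-1)/2), (u^2 - c j ^ 2)^2 := by
    have hIcc : ∀ n : ℕ, Finset.Icc 1 n = Finset.Ioc 0 n := fun n => Finset.Icc_add_one_left_eq_Ioc 0 n
    set k := (m-1)/2 with hk
    have hupper : ∀ a b : ℕ, a + 1 = m - k → b = m - 1 →
        (∏ j ∈ Finset.Ioc a b, (u^2 - c j ^ 2))
          = ∏ j ∈ Finset.Ioc 0 k, (u^2 - c j ^ 2) := by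
      intro a b ha hb
      refine Finset.prod_nbij' (fun j => m - j) (fun j => m - j) ?_ ?_ ?_ ?_ ?_
      · intro x hx; simp only [Finset.mem_Ioc] at *; omega
      · intro x hx; simp only [Finset.mem_Ioc] at *; omega
      · intro x hx; simp only [Finset.mem_Ioc] at hx; omega
      · intro x hx; simp only [Finset.mem_Ioc] at hx; omega
      · intro x hx
        simp only [Finset.mem_Ioc] at hx
        exact (hsym x (by omega) (by omega)).symm
    rcases Nat.even_or_odd m with he | ho
    · -- m even, m = 2k+2
      obtain ⟨t, ht⟩ := he
      have hm2 : m = 2*k + 2 := by omega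
      have hsplit1 : (∏ j ∈ Finset.Ioc 0 (m-1), (u^2 - c j ^ 2))
          = (∏ j ∈ Finset.Ioc 0 (k+1), (u^2 - c j ^ 2)) *
            ∏ j ∈ Finset.Ioc (k+1) (m-1), (u^2 - c j ^ 2) :=
        (Finset.prod_Ioc_consecutive _ (by omega) (by omega)).symm
      have hsplit2 : (∏ j ∈ Finset.Ioc 0 (k+1), (u^2 - c j ^ 2))
          = (∏ j ∈ Finset.Ioc 0 k, (u^2 - c j ^ 2)) * (u^2 - c (k+1) ^ 2) :=
        Finset.prod_Ioc_succ_top (Nat.zero_le k) _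
      have hmid : c (k+1) = 0 := by
        have harg : ((k+1 : ℕ) : ℝ) * π / m = π / 2 := by
          rw [hm2]
          push_cast
          field_simp
        simp only [hc, harg, Real.cos_pi_div_two]
      have hev : Even m := ⟨t, ht⟩
      rw [hIcc, hIcc, hsplit1, hsplit2, hupper (k+1) (m-1) (by omega) rfl, hmid,
        if_pos hev]
      rw [Finset.prod_pow]
      ring
    · -- m odd, m = 2k+1
      obtain ⟨t, ht⟩ := ho
      have hm2 : m = 2*k + 1 := by omega
      have hsplit1 : (∏ j ∈ Finset.Ioc 0 (m-1), (u^2 - c j ^ 2))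
          = (∏ j ∈ Finset.Ioc 0 k, (u^2 - c j ^ 2)) *
            ∏ j ∈ Finset.Ioc k (m-1), (u^2 - c j ^ 2) :=
        (Finset.prod_Ioc_consecutive _ (by omega) (by omega)).symm
      rw [hIcc, hIcc, hsplit1, hupper k (m-1) (by omega) rfl,
        if_neg (by rw [Nat.even_iff]; omega)]
      rw [Finset.prod_pow]
      ring
  rw [hT, hUeval, mul_pow, hP2, hQ]
  have h4 : ((2:ℝ)^(m-1))^2 = 4^(m-1) := by
    rw [← pow_mul, show (4:ℝ) = 2^2 by norm_num, ← pow_mul]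
    ring_nf
  rw [h4]
  ring
end
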